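/- arXiv:1611.09002 — 2 statements merged into one kernel-verified Lean document; each statement's English description precedes it below -/
import Mathlib

section
/- Let G be a multigraph with maximum degree Δ ≤ k, let z be a vertex, e an uncoloured edge at z, and φ a proper partial k-edge-colouring of G leaving e uncoloured. If e cannot be properly coloured after any sequence of colour shifts along a maximal multi-fan at z, then every maximal multi-fan F = (f₁, x₁, …, f_p, x_p) at z with respect to e and φ satisfies the Vizing fan inequality: the sum over vertices x of F of (number of colours missing at x) is at most the number of edges of F counted appropriately, forcing p ≥ 2. -/
open Finset

/-- A multigraph on vertex type `V` with edge type `E`: each edge has an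
unordered pair of distinct endpoints (loopless). -/
structure Multigraph (V : Type) (E : Type) where
  ends : E → Sym2 V
  loopless : ∀ e, ¬ (ends e).IsDiag

namespace Multigraph

variable {V E : Type} [Fintype V] [Fintype E] [DecidableEq V] [DecidableEq E]

/-- The degree of a vertex: the number of edges incident to it. -/
noncomputable def degree (G : Multigraph V E) (v : V) : ℕ :=
  {e : E | v ∈ G.ends e}.ncard

/-- The multiplicity of an unordered pair of vertices. -/
noncomputable def multiplicity (G : Multigraph V E) (s : Sym2 V) : ℕ :=
  {e : E | G.ends e = s}.ncard

/-- Two distinct edges are adjacent when they share an endpoint. -/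
def EdgeAdj (G : Multigraph V E) (e f : E) : Prop :=
  e ≠ f ∧ ∃ v, v ∈ G.ends e ∧ v ∈ G.ends f

/-- A matching: a set of pairwise non-adjacent edges. -/
def IsMatching (G : Multigraph V E) (M : Finset E) : Prop :=
  ∀ e ∈ M, ∀ f ∈ M, e ≠ f → ¬ G.EdgeAdj e f

/-- A maximal matching. -/
def IsMaximalMatching (G : Multigraph V E) (M : Finset E) : Prop :=
  G.IsMatching M ∧ ∀ f ∉ M, ∃ e ∈ M, G.EdgeAdj e f

/-- `c` is a proper edge-colouring of `G` minus the edge set `D`, using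
colours from `{1, …, k}`. -/
def IsProperOff (G : Multigraph V E) (D : Finset E) (k : ℕ) (c : E → ℕ) : Prop :=
  (∀ e, e ∉ D → c e ∈ Finset.Icc 1 k) ∧
    ∀ e f, e ∉ D → f ∉ D → G.EdgeAdj e f → c e ≠ c f

/-- The underlying simple graph of a multigraph. -/
def toSimple (G : Multigraph V E) : SimpleGraph V where
  Adj u v := u ≠ v ∧ ∃ e, G.ends e = s(u, v)
  symm := ⟨by
    rintro u v ⟨h, e, he⟩
    exact ⟨h.symm, e, he.trans Sym2.eq_swap⟩⟩
  loopless := ⟨fun v h => h.1 rfl⟩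

/-- The distance between edges `e` and `f` is at least `d`: every path in the
underlying graph between an endpoint of `e` and an endpoint of `f` has length
at least `d`. -/
def EdgeDistGe (G : Multigraph V E) (e f : E) (d : ℕ) : Prop :=
  ∀ u v, u ∈ G.ends e → v ∈ G.ends f → ∀ p : G.toSimple.Walk u v, d ≤ p.length

/-- The distance between edges `e` and `f` is at most `d`. -/
def EdgeDistLe (G : Multigraph V E) (e f : E) (d : ℕ) : Prop :=
  ∃ u v, u ∈ G.ends e ∧ v ∈ G.ends f ∧ ∃ p : G.toSimple.Walk u v, p.length ≤ d

/-- `G` contains no cycle of length 5. -/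
def C5Free (G : Multigraph V E) : Prop :=
  ¬ ∃ (v : Fin 5 → V) (f : Fin 5 → E), Function.Injective v ∧ Function.Injective f ∧
      ∀ i : Fin 5, G.ends (f i) = s(v i, v (i + 1))

end Multigraph

namespace Multigraph

variable {V E : Type} [Fintype V] [Fintype E] [DecidableEq V] [DecidableEq E]

/-- Colour `c` is missing at the vertex `v`, where `φ` colours the edges
outside `D` from `{1, …, k}`. -/
def MissingAt (G : Multigraph V E) (D : Finset E) (φ : E → ℕ) (k : ℕ) (v : V) (c : ℕ) : Prop :=
  c ∈ Finset.Icc 1 k ∧ ∀ g, g ∉ D → v ∈ G.ends g → φ g ≠ c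

/-- A multi-fan `(f₁, x₁, …, f_p, x_p)` at `z` with respect to the edge
`e = f₁` and the colouring `φ` of the edges outside `D`. -/
structure IsMultiFan (G : Multigraph V E) (D : Finset E) (φ : E → ℕ) (k : ℕ)
    (z : V) (e : E) (p : ℕ) (f : Fin p → E) (x : Fin p → V) : Prop where
  pos : 0 < p
  inj : Function.Injective f
  first : f ⟨0, pos⟩ = e
  ends_eq : ∀ i, G.ends (f i) = s(z, x i)
  coloured : ∀ i : Fin p, i.val ≠ 0 → f i ∉ D
  missing : ∀ i : Fin p, i.val ≠ 0 →
    ∃ j : Fin p, j.val < i.val ∧ G.MissingAt D φ k (x j) (φ (f i))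

/-- A maximal multi-fan: it cannot be extended by any further coloured edge
at `z`. -/
def IsMaximalMultiFan (G : Multigraph V E) (D : Finset E) (φ : E → ℕ) (k : ℕ)
    (z : V) (e : E) (p : ℕ) (f : Fin p → E) (x : Fin p → V) : Prop :=
  G.IsMultiFan D φ k z e p f x ∧
    ∀ g, g ∉ D → g ∉ Set.range f → z ∈ G.ends g →
      ¬ ∃ j : Fin p, G.MissingAt D φ k (x j) (φ g)

/-- A path starting at `u` that alternates between edges `φ`-coloured `i`
and edges of `M' \ M`. -/
def IsAltPath (G : Multigraph V E) (M M' : Finset E) (φ : E → ℕ) (i : ℕ) (u : V)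
    (n : ℕ) (w : Fin (n + 1) → V) (g : Fin n → E) : Prop :=
  w 0 = u ∧ Function.Injective w ∧
    (∀ k : Fin n, G.ends (g k) = s(w k.castSucc, w k.succ)) ∧
    ∀ k : Fin n, if Even k.val then g k ∉ M' ∧ φ (g k) = i else g k ∈ M' \ M

/-- The maximal alternating path starting at `u` contains more than one edge,
i.e. there is an alternating path from `u` with at least two edges. -/
def LongAlt (G : Multigraph V E) (M M' : Finset E) (φ : E → ℕ) (i : ℕ) (u : V) : Prop :=
  ∃ (n : ℕ) (w : Fin (n + 1) → V) (g : Fin n → E),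
    G.IsAltPath M M' φ i u n w g ∧ 2 ≤ n

/-- The set `A_i`: all edges lying on an alternating path starting at an
endpoint of an edge of `M` precoloured `i`. -/
def AltSet (G : Multigraph V E) (M M' : Finset E) (φ Φ : E → ℕ) (i : ℕ) : Set E :=
  {a | ∃ e ∈ M, Φ e = i ∧ ∃ u ∈ G.ends e, ∃ (n : ℕ) (w : Fin (n + 1) → V)
    (g : Fin n → E) (k : Fin n), G.IsAltPath M M' φ i u n w g ∧ g k = a}

/-- An edge `e ∈ M` is bad with respect to `(M', φ)`: there is a path
`e, e₁, e₂` with `φ e₁ = Φ e` and `e₂ ∈ M' \ M`. -/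
def IsBadEdge (G : Multigraph V E) (M M' : Finset E) (Φ φ : E → ℕ) (e : E) : Prop :=
  e ∈ M ∧ ∃ e₁ e₂, G.EdgeAdj e e₁ ∧ G.EdgeAdj e₁ e₂ ∧ e₁ ∉ M' ∧
    φ e₁ = Φ e ∧ e₂ ∈ M' \ M

end Multigraph


namespace Multigraph

variable {V E : Type} [Fintype V] [Fintype E] [DecidableEq V] [DecidableEq E]

lemma sym2_eq_of_mem {s : Sym2 V} {a b : V} (ha : a ∈ s) (hb : b ∈ s) (hab : a ≠ b) :
    s = s(a, b) := by
  induction s using Sym2.ind with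
  | _ x y =>
    rw [Sym2.mem_iff] at ha hb
    obtain ha | ha := ha <;> obtain hb | hb := hb <;> subst_vars <;>
      simp_all [Sym2.eq_swap]

variable (G : Multigraph V E)

/-- Steps along edges in `S`. -/
def stepS (S : Finset E) (a b : V) : Prop := ∃ g ∈ S, G.ends g = s(a, b)

lemma stepS_symm {S : Finset E} {a b : V} (h : G.stepS S a b) : G.stepS S b a := by
  obtain ⟨g, hg, he⟩ := h
  exact ⟨g, hg, he.trans Sym2.eq_swap⟩

lemma rtg_symm {S : Finset E} {a b : V}
    (h : Relation.ReflTransGen (G.stepS S) a b) :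
    Relation.ReflTransGen (G.stepS S) b a := by
  induction h with
  | refl => exact .refl
  | tail _ h2 ih => exact .head (G.stepS_symm h2) ih

/-- Degree of a vertex within the edge set `S`. -/
def edeg (S : Finset E) (w : V) : ℕ := (S.filter fun g => w ∈ G.ends g).card

lemma edeg_unique {S : Finset E} {w : V} (h : G.edeg S w ≤ 1) {g h' : E}
    (hg : g ∈ S) (hw : w ∈ G.ends g) (hg' : h' ∈ S) (hw' : w ∈ G.ends h') : g = h' :=
  Finset.card_le_one.mp h g (Finset.mem_filter.mpr ⟨hg, hw⟩) h' (Finset.mem_filter.mpr ⟨hg', hw'⟩)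

lemma avoid (S : Finset E) (g : E) (a d : V) (hg : g ∈ S) (hends : G.ends g = s(a, d))
    (hdeg : G.edeg S a ≤ 1) {y b : V} (hb : b ≠ a)
    (hp : Relation.ReflTransGen (G.stepS S) y b) :
    (y ≠ a → Relation.ReflTransGen (G.stepS (S.erase g)) y b) ∧
      (y = a → Relation.ReflTransGen (G.stepS (S.erase g)) d b) := by
  have hga : a ∈ G.ends g := by rw [hends]; exact Sym2.mem_mk_left _ _
  have hnd : a ≠ d := by
    intro h; exact G.loopless g (by rw [hends, ← h]; exact Sym2.mk_isDiag_iff.mpr rfl)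
  induction hp using Relation.ReflTransGen.head_induction_on with
  | refl => exact ⟨fun _ => .refl, fun h => absurd h hb⟩
  | @head y y' hstep htail ih =>
    obtain ⟨h, hhS, hhe⟩ := hstep
    constructor
    · intro hya
      by_cases hy'a : y' = a
      · have hha : a ∈ G.ends h := by rw [hhe, hy'a]; exact Sym2.mem_mk_right _ _
        have hEq : h = g := G.edeg_unique hdeg hhS hha hg hga
        have hhe' : s(y, y') = s(a, d) := by rw [← hhe, hEq, hends]
        rw [Sym2.eq_iff] at hhe'
        rcases hhe' with ⟨h1, _⟩ | ⟨h1, _⟩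
        · exact absurd h1 hya
        · rw [h1]; exact ih.2 hy'a
      · have hne : h ≠ g := by
          intro hEq
          rw [hEq, hends] at hhe
          have : a ∈ s(y, y') := by rw [← hhe]; exact Sym2.mem_mk_left _ _
          rw [Sym2.mem_iff] at this
          rcases this with h1 | h1
          · exact hya h1.symm
          · exact hy'a h1.symm
        exact .head ⟨h, Finset.mem_erase.mpr ⟨hne, hhS⟩, hhe⟩ (ih.1 hy'a)
    · intro hya
      have hha : a ∈ G.ends h := by rw [hhe, hya]; exact Sym2.mem_mk_left _ _
      have hEq : h = g := G.edeg_unique hdeg hhS hha hg hga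
      have hhe' : s(y, y') = s(a, d) := by rw [← hhe, hEq, hends]
      rw [hya, Sym2.eq_iff] at hhe'
      rcases hhe' with ⟨_, h2⟩ | ⟨h1, _⟩
      · rw [← h2]; exact ih.1 (by rw [h2]; exact fun hh => hnd hh.symm)
      · exact absurd h1 hnd

lemma edeg_erase_le {S : Finset E} {g : E} {w : V} :
    G.edeg (S.erase g) w ≤ G.edeg S w :=
  Finset.card_le_card (Finset.filter_subset_filter _ (Finset.erase_subset _ _))

lemma tri : ∀ (N : ℕ) (S : Finset E), S.card ≤ N → (∀ w, G.edeg S w ≤ 2) →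
    ∀ a b c : V, a ≠ b → a ≠ c → b ≠ c →
      G.edeg S a ≤ 1 → G.edeg S b ≤ 1 → G.edeg S c ≤ 1 →
      Relation.ReflTransGen (G.stepS S) a b →
      Relation.ReflTransGen (G.stepS S) a c → False := by
  intro N
  induction N with
  | zero =>
    intro S hcard _ a b c hab _ _ _ _ _ hpb _
    rcases hpb.cases_head with h | ⟨d, ⟨g, hgS, _⟩, _⟩
    · exact hab h
    · have : S = ∅ := Finset.card_eq_zero.mp (Nat.le_zero.mp hcard)
      simp [this] at hgS
  | succ N ih =>
    intro S hcard hdeg2 a b c hab hac hbc hda hdb hdc hpb hpc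
    rcases hpb.cases_head with heq | ⟨d, ⟨g, hgS, hge⟩, hdbpath⟩
    · exact hab heq
    rcases hpc.cases_head with heq | ⟨d', ⟨g', hg'S, hg'e⟩, hdcpath⟩
    · exact hac heq
    have hga : a ∈ G.ends g := by rw [hge]; exact Sym2.mem_mk_left _ _
    have hg'a : a ∈ G.ends g' := by rw [hg'e]; exact Sym2.mem_mk_left _ _
    have hEq : g' = g := G.edeg_unique hda hg'S hg'a hgS hga
    rw [hEq, hge] at hg'e
    have had : a ≠ d := by
      intro h; exact G.loopless g (by rw [hge, ← h]; exact Sym2.mk_isDiag_iff.mpr rfl)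
    have hdd' : d' = d := by
      rw [Sym2.eq_iff] at hg'e
      rcases hg'e with ⟨_, h2⟩ | ⟨_, h2⟩
      · exact h2.symm
      · exact absurd h2.symm had
    rw [hdd'] at hdcpath
    set S' := S.erase g with hS'
    have hgd : d ∈ G.ends g := by rw [hge]; exact Sym2.mem_mk_right _ _
    have hd'b : Relation.ReflTransGen (G.stepS S') d b :=
      (G.avoid S g a d hgS hge hda (fun h => hab h.symm) hdbpath).1 (fun h => had h.symm)
    have hd'c : Relation.ReflTransGen (G.stepS S') d c :=
      (G.avoid S g a d hgS hge hda (fun h => hac h.symm) hdcpath).1 (fun h => had h.symm)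
    have hfe : (S'.filter fun h => d ∈ G.ends h) = (S.filter fun h => d ∈ G.ends h).erase g := by
      rw [hS', Finset.filter_erase]
    have hdd : G.edeg S' d ≤ 1 := by
      rw [edeg, hfe]
      have hgm : g ∈ S.filter fun h => d ∈ G.ends h := Finset.mem_filter.mpr ⟨hgS, hgd⟩
      rw [Finset.card_erase_of_mem hgm]
      have h9 := hdeg2 d
      rw [edeg] at h9
      
      omega
    by_cases hdb' : d = b
    · subst hdb'
      have : G.edeg S' d = 0 := by
        rw [edeg, hfe]
        have hgm : g ∈ S.filter fun h => d ∈ G.ends h := Finset.mem_filter.mpr ⟨hgS, hgd⟩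
        rw [Finset.card_erase_of_mem hgm]
        have h8 := hdb
        rw [edeg] at h8
        omega
      rcases hd'c.cases_head with h | ⟨w, ⟨h', hh'S, hh'e⟩, _⟩
      · exact hbc h
      · have : h' ∈ S'.filter fun h => d ∈ G.ends h :=
          Finset.mem_filter.mpr ⟨hh'S, by rw [hh'e]; exact Sym2.mem_mk_left _ _⟩
        rw [Finset.card_eq_zero.mp ‹G.edeg S' d = 0›] at this
        simp at this
    · by_cases hdc' : d = c
      · subst hdc'
        have : G.edeg S' d = 0 := by
          rw [edeg, hfe]
          have hgm : g ∈ S.filter fun h => d ∈ G.ends h := Finset.mem_filter.mpr ⟨hgS, hgd⟩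
          rw [Finset.card_erase_of_mem hgm]
          have h8 := hdc
          rw [edeg] at h8
          omega
        rcases hd'b.cases_head with h | ⟨w, ⟨h', hh'S, hh'e⟩, _⟩
        · exact hbc h.symm
        · have : h' ∈ S'.filter fun h => d ∈ G.ends h :=
            Finset.mem_filter.mpr ⟨hh'S, by rw [hh'e]; exact Sym2.mem_mk_left _ _⟩
          rw [Finset.card_eq_zero.mp ‹G.edeg S' d = 0›] at this
          simp at this
      · have hcard' : S'.card ≤ N := by
          rw [hS', Finset.card_erase_of_mem hgS]
          omega
        exact ih S' hcard' (fun w => le_trans (G.edeg_erase_le) (hdeg2 w)) d b c hdb' hdc' hbc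
          hdd (le_trans G.edeg_erase_le hdb) (le_trans G.edeg_erase_le hdc) hd'b hd'c


lemma unique_at {k : ℕ} {e : E} {φ : E → ℕ} (hφ : G.IsProperOff {e} k φ) {w : V} {g h : E}
    (hg : g ≠ e) (hh : h ≠ e) (hwg : w ∈ G.ends g) (hwh : w ∈ G.ends h) (hc : φ g = φ h) :
    g = h := by
  by_contra hne
  exact hφ.2 g h (by simp [hg]) (by simp [hh]) ⟨hne, w, hwg, hwh⟩ hc

lemma mk_prefix {k : ℕ} {z : V} {e : E} {φ φ' : E → ℕ} {p : ℕ} {f : Fin p → E} {x : Fin p → V}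
    (hfan : G.IsMultiFan {e} φ k z e p f x) (b : ℕ) (hb : b < p)
    (hmiss : ∀ kk : Fin p, kk.val ≠ 0 → kk.val ≤ b →
      ∃ w : Fin p, w.val < kk.val ∧ G.MissingAt {e} φ' k (x w) (φ' (f kk))) :
    G.IsMultiFan {e} φ' k z e (b + 1)
      (fun s => f ⟨s.val, lt_of_le_of_lt (Nat.lt_succ_iff.mp s.isLt) hb⟩)
      (fun s => x ⟨s.val, lt_of_le_of_lt (Nat.lt_succ_iff.mp s.isLt) hb⟩) := by
  refine ⟨Nat.succ_pos b, ?_, ?_, ?_, ?_, ?_⟩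
  · intro s s' hEq
    have h2 := hfan.inj hEq
    rw [Fin.mk.injEq] at h2
    exact Fin.ext h2
  · exact hfan.first
  · intro s; exact hfan.ends_eq _
  · intro s hs; exact hfan.coloured _ hs
  · intro s hs
    obtain ⟨w, hw, hwm⟩ := hmiss ⟨s.val, lt_of_le_of_lt (Nat.lt_succ_iff.mp s.isLt) hb⟩ hs
      (Nat.lt_succ_iff.mp s.isLt)
    have hw' : w.val < s.val := hw
    have hws : w.val < b + 1 := lt_trans hw' s.isLt
    refine ⟨⟨w.val, hws⟩, hw, ?_⟩
    have hxw : x ⟨(⟨w.val, hws⟩ : Fin (b+1)).val, lt_of_le_of_lt (Nat.lt_succ_iff.mp hws) hb⟩ = x w :=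
      congrArg x (Fin.ext rfl)
    rw [hxw]
    exact hwm

lemma extend_base {k : ℕ} {z : V} {e : E} {φ : E → ℕ} (hφ : G.IsProperOff {e} k φ)
    {p : ℕ} {f : Fin p → E} {x : Fin p → V} (hfan : G.IsMultiFan {e} φ k z e p f x)
    {i : Fin p} (hi : i.val = 0) {γ : ℕ}
    (hγz : G.MissingAt {e} φ k z γ) (hγx : G.MissingAt {e} φ k (x i) γ) :
    ∃ c, G.IsProperOff ∅ k c := by
  have hie : f i = e := by
    have h2 : i = ⟨0, hfan.pos⟩ := Fin.ext (by simp [hi])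
    rw [h2]; exact hfan.first
  have hend : G.ends e = s(z, x i) := by rw [← hie]; exact hfan.ends_eq i
  refine ⟨Function.update φ e γ, ?_, ?_⟩
  · intro g _
    by_cases hg : g = e
    · subst hg; rw [Function.update_self]; exact hγz.1
    · rw [Function.update_of_ne hg]; exact hφ.1 g (by simp [hg])
  · intro g h _ _ hadj
    by_cases hg : g = e <;> by_cases hh : h = e
    · exact absurd (hg.trans hh.symm) hadj.1
    · subst hg; rw [Function.update_self, Function.update_of_ne hh]
      obtain ⟨_, w, hwg, hwh⟩ := hadj
      rw [hend, Sym2.mem_iff] at hwg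
      rcases hwg with h1 | h1 <;> subst h1
      · exact fun hc => hγz.2 h (by simp [hh]) hwh hc.symm
      · exact fun hc => hγx.2 h (by simp [hh]) hwh hc.symm
    · subst hh; rw [Function.update_self, Function.update_of_ne hg]
      obtain ⟨_, w, hwg, hwh⟩ := hadj
      rw [hend, Sym2.mem_iff] at hwh
      rcases hwh with h1 | h1 <;> subst h1
      · exact hγz.2 g (by simp [hg]) hwg
      · exact hγx.2 g (by simp [hg]) hwg
    · rw [Function.update_of_ne hg, Function.update_of_ne hh]
      exact hφ.2 g h (by simp [hg]) (by simp [hh]) hadj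

lemma extend_common {k : ℕ} {z : V} {e : E} : ∀ (n : ℕ) (φ : E → ℕ), G.IsProperOff {e} k φ →
    ∀ (p : ℕ) (f : Fin p → E) (x : Fin p → V), G.IsMultiFan {e} φ k z e p f x →
    ∀ (i : Fin p), i.val ≤ n → ∀ γ, G.MissingAt {e} φ k z γ → G.MissingAt {e} φ k (x i) γ →
    ∃ c, G.IsProperOff ∅ k c := by
  intro n
  induction n with
  | zero =>
    intro φ hφ p f x hfan i hi γ h1 h2
    exact G.extend_base hφ hfan (Nat.le_zero.mp hi) h1 h2
  | succ n ih =>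
    intro φ hφ p f x hfan i hi γ hγz hγx
    by_cases h0 : i.val = 0
    · exact G.extend_base hφ hfan h0 hγz hγx
    · obtain ⟨l, hllt, hlm⟩ := hfan.missing i h0
      have hfie : f i ≠ e := by simpa using hfan.coloured i h0
      have hfiz : z ∈ G.ends (f i) := by rw [hfan.ends_eq i]; exact Sym2.mem_mk_left _ _
      have hβγ : φ (f i) ≠ γ := hγz.2 (f i) (by simp [hfie]) hfiz
      set φ' := Function.update φ (f i) γ with hφ'def
      have hupd : ∀ g, g ≠ f i → φ' g = φ g := fun g hg => Function.update_of_ne hg _ _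
      have hself : φ' (f i) = γ := Function.update_self _ _ _
      have hφ' : G.IsProperOff {e} k φ' := by
        constructor
        · intro g hg
          by_cases hgf : g = f i
          · subst hgf; rw [hself]; exact hγz.1
          · rw [hupd g hgf]; exact hφ.1 g hg
        · intro g h hg hh hadj
          by_cases hgf : g = f i <;> by_cases hhf : h = f i
          · exact absurd (hgf.trans hhf.symm) hadj.1
          · subst hgf; rw [hself, hupd h hhf]
            obtain ⟨_, w, hwg, hwh⟩ := hadj
            rw [hfan.ends_eq i, Sym2.mem_iff] at hwg
            rcases hwg with h1 | h1 <;> subst h1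
            · exact fun hc => hγz.2 h hh hwh hc.symm
            · exact fun hc => hγx.2 h hh hwh hc.symm
          · subst hhf; rw [hself, hupd g hgf]
            obtain ⟨_, w, hwg, hwh⟩ := hadj
            rw [hfan.ends_eq i, Sym2.mem_iff] at hwh
            rcases hwh with h1 | h1 <;> subst h1
            · exact hγz.2 g hg hwg
            · exact hγx.2 g hg hwg
          · rw [hupd g hgf, hupd h hhf]; exact hφ.2 g h hg hh hadj
      have hmiss : ∀ kk : Fin p, kk.val ≠ 0 → kk.val ≤ l.val →
          ∃ w : Fin p, w.val < kk.val ∧ G.MissingAt {e} φ' k (x w) (φ' (f kk)) := by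
        intro kk hkk0 hkkl
        obtain ⟨w, hw, hwm⟩ := hfan.missing kk hkk0
        have hne : f kk ≠ f i := by
          intro hEq
          have h3 := congrArg Fin.val (hfan.inj hEq)
          omega
        refine ⟨w, hw, ?_⟩
        rw [hupd _ hne]
        have hckk : φ (f kk) ≠ γ := hγz.2 (f kk) (hfan.coloured kk hkk0)
          (by rw [hfan.ends_eq kk]; exact Sym2.mem_mk_left _ _)
        refine ⟨hwm.1, ?_⟩
        intro g hg hgw
        by_cases hgf : g = f i
        · subst hgf; rw [hself]; exact fun hc => hckk hc.symm
        · rw [hupd g hgf]; exact hwm.2 g hg hgw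
      have hfan' := G.mk_prefix hfan l.val l.isLt hmiss
      have hβz' : G.MissingAt {e} φ' k z (φ (f i)) := by
        refine ⟨hφ.1 (f i) (by simp [hfie]), ?_⟩
        intro g hg hgz
        by_cases hgf : g = f i
        · subst hgf; rw [hself]; exact fun hc => hβγ hc.symm
        · rw [hupd g hgf]
          exact hφ.2 g (f i) hg (by simp [hfie]) ⟨hgf, z, hgz, hfiz⟩
      have hβx' : G.MissingAt {e} φ' k (x l) (φ (f i)) := by
        refine ⟨hlm.1, ?_⟩
        intro g hg hgw
        by_cases hgf : g = f i
        · subst hgf; rw [hself]; exact fun hc => hβγ hc.symm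
        · rw [hupd g hgf]; exact hlm.2 g hg hgw
      refine ih φ' hφ' (l.val + 1) _ _ hfan' ⟨l.val, Nat.lt_succ_self _⟩ (by omega) (φ (f i))
        hβz' ?_
      have hxl : x ⟨(⟨l.val, Nat.lt_succ_self _⟩ : Fin (l.val+1)).val,
          lt_of_le_of_lt (Nat.lt_succ_iff.mp (Nat.lt_succ_self _)) l.isLt⟩ = x l :=
        congrArg x (Fin.ext rfl)
      simpa [hxl] using hβx'

lemma exists_missing {Δ k : ℕ} (hΔ : ∀ v, G.degree v ≤ Δ) (hΔk : Δ ≤ k) {e : E} {φ : E → ℕ}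
    (hφ : G.IsProperOff {e} k φ) (v : V) (hv : v ∈ G.ends e) :
    ∃ β, G.MissingAt {e} φ k v β := by
  classical
  have hdeg : G.degree v = (Finset.univ.filter fun g => v ∈ G.ends g).card := by
    rw [degree, show {g : E | v ∈ G.ends g} = ↑(Finset.univ.filter fun g => v ∈ G.ends g) by
      ext g; simp]
    exact Set.ncard_coe_finset _
  set T := Finset.univ.filter (fun g => v ∈ G.ends g ∧ g ≠ e) with hT
  have heT : e ∉ T := by simp [hT]
  have hTsub : insert e T ⊆ Finset.univ.filter fun g => v ∈ G.ends g := by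
    intro g hg
    rcases Finset.mem_insert.mp hg with rfl | hg
    · simp [hv]
    · simp only [hT, Finset.mem_filter] at hg ⊢
      exact ⟨hg.1, hg.2.1⟩
  have hTcard : T.card + 1 ≤ k := by
    have h2 := Finset.card_le_card hTsub
    rw [Finset.card_insert_of_notMem heT] at h2
    have h3 := hΔ v
    rw [hdeg] at h3
    omega
  have hnotsub : ¬ (Finset.Icc 1 k ⊆ T.image φ) := by
    intro hsub
    have h4 := Finset.card_le_card hsub
    have h5 := Finset.card_image_le (s := T) (f := φ)
    rw [Nat.card_Icc] at h4
    omega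
  obtain ⟨β, hβIcc, hβni⟩ := Finset.not_subset.mp hnotsub
  refine ⟨β, hβIcc, ?_⟩
  intro g hg hgv hc
  have hge : g ≠ e := by simpa using hg
  exact hβni (Finset.mem_image.mpr ⟨g, by simp [hT, hgv, hge], hc⟩)

lemma swap_case {k : ℕ} {z : V} {e : E} {φ : E → ℕ}
    (hφ : G.IsProperOff {e} k φ) {p : ℕ} {f : Fin p → E} {x : Fin p → V}
    (hfan : G.IsMultiFan {e} φ k z e p f x)
    {γ β : ℕ} (hγβ : γ ≠ β) (hβz : G.MissingAt {e} φ k z β)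
    (t : Fin p) (hγt : G.MissingAt {e} φ k (x t) γ)
    (hnr : ¬ Relation.ReflTransGen
      (G.stepS (Finset.univ.filter fun g => g ≠ e ∧ (φ g = γ ∨ φ g = β))) (x t) z) :
    ∃ c, G.IsProperOff ∅ k c := by
  classical
  set S := Finset.univ.filter (fun g => g ≠ e ∧ (φ g = γ ∨ φ g = β)) with hS
  set u := x t with hu
  set Reach := fun w => Relation.ReflTransGen (G.stepS S) u w with hReach
  set SW := fun g => g ∈ S ∧ ∃ w ∈ G.ends g, Reach w with hSWdef
  set φ' := fun g => if SW g then (if φ g = γ then β else γ) else φ g with hφ'def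
  have hγI : γ ∈ Finset.Icc 1 k := hγt.1
  have hβI : β ∈ Finset.Icc 1 k := hβz.1
  have hSWall : ∀ g, SW g → ∀ w ∈ G.ends g, Reach w := by
    rintro g ⟨hgS, w0, hw0, hr0⟩ w hw
    by_cases hww : w = w0
    · rwa [hww]
    · have hends : G.ends g = s(w0, w) := sym2_eq_of_mem hw0 hw (Ne.symm hww)
      exact Relation.ReflTransGen.tail hr0 ⟨g, hgS, hends⟩
  have hnoz : ∀ g, SW g → z ∉ G.ends g := fun g hg hz' => hnr (hSWall g hg z hz')
  have hfix : ∀ g, ¬ SW g → φ' g = φ g := fun g hg => if_neg hg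
  have hswap : ∀ g, SW g → (φ g = γ ∧ φ' g = β) ∨ (φ g = β ∧ φ' g = γ) := by
    intro g hg
    rcases (Finset.mem_filter.mp hg.1).2.2 with h | h
    · left; refine ⟨h, ?_⟩
      show (if SW g then (if φ g = γ then β else γ) else φ g) = β
      rw [if_pos hg, if_pos h]
    · right; refine ⟨h, ?_⟩
      have hne : φ g ≠ γ := by rw [h]; exact fun hh => hγβ hh.symm
      show (if SW g then (if φ g = γ then β else γ) else φ g) = γ
      rw [if_pos hg, if_neg hne]
  have hSWne : ∀ g, SW g → g ≠ e := fun g hg => (Finset.mem_filter.mp hg.1).2.1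
  have hφ' : G.IsProperOff {e} k φ' := by
    constructor
    · intro g hg
      by_cases h : SW g
      · rcases hswap g h with ⟨_, h2⟩ | ⟨_, h2⟩ <;> rw [h2]
        · exact hβI
        · exact hγI
      · rw [hfix g h]; exact hφ.1 g hg
    · intro g h hg hh hadj
      obtain ⟨hne, w, hwg, hwh⟩ := hadj
      by_cases hg' : SW g <;> by_cases hh' : SW h
      · rcases hswap g hg' with ⟨a1, a2⟩ | ⟨a1, a2⟩ <;>
          rcases hswap h hh' with ⟨b1, b2⟩ | ⟨b1, b2⟩ <;> rw [a2, b2]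
        · exact absurd (a1.trans b1.symm) (hφ.2 g h hg hh ⟨hne, w, hwg, hwh⟩)
        · exact fun hc => hγβ hc.symm
        · exact hγβ
        · exact absurd (a1.trans b1.symm) (hφ.2 g h hg hh ⟨hne, w, hwg, hwh⟩)
      · have hhe : h ≠ e := by simpa using hh
        have hhcol : φ h ≠ γ ∧ φ h ≠ β := by
          constructor <;> intro hc
          · exact hh' ⟨Finset.mem_filter.mpr ⟨Finset.mem_univ h, hhe, Or.inl hc⟩,
              w, hwh, hSWall g hg' w hwg⟩
          · exact hh' ⟨Finset.mem_filter.mpr ⟨Finset.mem_univ h, hhe, Or.inr hc⟩,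
              w, hwh, hSWall g hg' w hwg⟩
        rw [hfix h hh']
        rcases hswap g hg' with ⟨_, a2⟩ | ⟨_, a2⟩ <;> rw [a2]
        · exact fun hc => hhcol.2 hc.symm
        · exact fun hc => hhcol.1 hc.symm
      · have hge : g ≠ e := by simpa using hg
        have hgcol : φ g ≠ γ ∧ φ g ≠ β := by
          constructor <;> intro hc
          · exact hg' ⟨Finset.mem_filter.mpr ⟨Finset.mem_univ g, hge, Or.inl hc⟩,
              w, hwg, hSWall h hh' w hwh⟩
          · exact hg' ⟨Finset.mem_filter.mpr ⟨Finset.mem_univ g, hge, Or.inr hc⟩,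
              w, hwg, hSWall h hh' w hwh⟩
        rw [hfix g hg']
        rcases hswap h hh' with ⟨_, b2⟩ | ⟨_, b2⟩ <;> rw [b2]
        · exact hgcol.2
        · exact hgcol.1
      · rw [hfix g hg', hfix h hh']; exact hφ.2 g h hg hh ⟨hne, w, hwg, hwh⟩
  have hmiss_other : ∀ w c, c ≠ γ → c ≠ β →
      G.MissingAt {e} φ k w c → G.MissingAt {e} φ' k w c := by
    intro w c hcγ hcβ hm
    refine ⟨hm.1, ?_⟩
    intro g hg hgw
    by_cases h : SW g
    · rcases hswap g h with ⟨_, h2⟩ | ⟨_, h2⟩ <;> rw [h2]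
      · exact fun hc => hcβ hc.symm
      · exact fun hc => hcγ hc.symm
    · rw [hfix g h]; exact hm.2 g hg hgw
  have hβz' : G.MissingAt {e} φ' k z β := by
    refine ⟨hβI, fun g hg hgz => ?_⟩
    have hnsw : ¬ SW g := fun h => hnoz g h hgz
    rw [hfix g hnsw]; exact hβz.2 g hg hgz
  have hzmem : ∀ kk : Fin p, z ∈ G.ends (f kk) := fun kk => by
    rw [hfan.ends_eq kk]; exact Sym2.mem_mk_left _ _
  have hfanfix : ∀ kk : Fin p, φ' (f kk) = φ (f kk) := fun kk =>
    hfix _ (fun h => hnoz _ h (hzmem kk))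
  have hβfan : ∀ kk : Fin p, kk.val ≠ 0 → φ (f kk) ≠ β := fun kk h1 =>
    hβz.2 (f kk) (hfan.coloured kk h1) (hzmem kk)
  have huβ' : G.MissingAt {e} φ' k u β := by
    refine ⟨hβI, fun g hg hgu => ?_⟩
    by_cases h : SW g
    · rcases hswap g h with ⟨h1, h2⟩ | ⟨h1, h2⟩
      · exact absurd h1 (hγt.2 g hg hgu)
      · rw [h2]; exact hγβ
    · rw [hfix g h]
      intro hc
      exact h ⟨Finset.mem_filter.mpr ⟨Finset.mem_univ g, by simpa using hg, Or.inr hc⟩,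
        u, hgu, Relation.ReflTransGen.refl⟩
  by_cases hk0 : ∃ kk : Fin p, kk.val ≠ 0 ∧ kk.val ≤ t.val ∧ φ (f kk) = γ
  · obtain ⟨k0, hk00, hk0t, hk0γ⟩ := hk0
    obtain ⟨w0, hw0lt, hw0m'⟩ := hfan.missing k0 hk00
    have hw0m : G.MissingAt {e} φ k (x w0) γ := by rwa [hk0γ] at hw0m'
    by_cases hwβ : G.MissingAt {e} φ k (x w0) β
    · exact G.extend_common w0.val φ hφ p f x hfan w0 (le_refl _) β hβz hwβ
    · by_cases hwγ' : G.MissingAt {e} φ' k (x w0) γ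
      · have hmiss : ∀ kk : Fin p, kk.val ≠ 0 → kk.val ≤ t.val →
            ∃ w : Fin p, w.val < kk.val ∧ G.MissingAt {e} φ' k (x w) (φ' (f kk)) := by
          intro kk h1 h2
          by_cases hc : φ (f kk) = γ
          · have hkk : f kk = f k0 := G.unique_at hφ (by simpa using hfan.coloured kk h1)
              (by simpa using hfan.coloured k0 hk00) (hzmem kk) (hzmem k0)
              (hc.trans hk0γ.symm)
            have hkeq : kk = k0 := hfan.inj hkk
            refine ⟨w0, by rw [hkeq]; exact hw0lt, ?_⟩
            rw [hfanfix kk, hc]; exact hwγ'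
          · obtain ⟨w, hw, hwm⟩ := hfan.missing kk h1
            refine ⟨w, hw, ?_⟩
            rw [hfanfix kk]
            exact hmiss_other _ _ hc (hβfan kk h1) hwm
        have hfan' := G.mk_prefix hfan t.val t.isLt hmiss
        refine G.extend_common t.val φ' hφ' _ _ _ hfan' ⟨t.val, Nat.lt_succ_self _⟩
          (le_refl _) β hβz' ?_
        have hxt : x ⟨(⟨t.val, Nat.lt_succ_self _⟩ : Fin (t.val+1)).val,
            lt_of_le_of_lt (Nat.lt_succ_iff.mp (Nat.lt_succ_self _)) t.isLt⟩ = x t :=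
          congrArg x (Fin.ext rfl)
        simpa [hxt] using huβ'
      · have hwβ' : G.MissingAt {e} φ' k (x w0) β := by
          refine ⟨hβI, fun g hg hgw => ?_⟩
          by_cases h : SW g
          · rcases hswap g h with ⟨h1, h2⟩ | ⟨h1, h2⟩
            · exact absurd h1 (hw0m.2 g hg hgw)
            · rw [h2]; exact hγβ
          · rw [hfix g h]
            intro hc
            apply hwγ'
            refine ⟨hγI, fun g2 hg2 hg2w => ?_⟩
            by_cases h2' : SW g2
            · rcases hswap g2 h2' with ⟨a1, a2⟩ | ⟨a1, a2⟩
              · exact absurd a1 (hw0m.2 g2 hg2 hg2w)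
              · have hgg : g2 = g := G.unique_at hφ (hSWne g2 h2') (by simpa using hg)
                  hg2w hgw (a1.trans hc.symm)
                exact absurd (hgg ▸ h2') h
            · rw [hfix g2 h2']; exact hw0m.2 g2 hg2 hg2w
        have hmiss : ∀ kk : Fin p, kk.val ≠ 0 → kk.val ≤ w0.val →
            ∃ w : Fin p, w.val < kk.val ∧ G.MissingAt {e} φ' k (x w) (φ' (f kk)) := by
          intro kk h1 h2
          obtain ⟨w, hw, hwm⟩ := hfan.missing kk h1
          have hcγ : φ (f kk) ≠ γ := by
            intro hc
            have hkk : f kk = f k0 := G.unique_at hφ (by simpa using hfan.coloured kk h1)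
              (by simpa using hfan.coloured k0 hk00) (hzmem kk) (hzmem k0)
              (hc.trans hk0γ.symm)
            have hkeq := congrArg Fin.val (hfan.inj hkk)
            omega
          refine ⟨w, hw, ?_⟩
          rw [hfanfix kk]
          exact hmiss_other _ _ hcγ (hβfan kk h1) hwm
        have hfan' := G.mk_prefix hfan w0.val w0.isLt hmiss
        refine G.extend_common w0.val φ' hφ' _ _ _ hfan' ⟨w0.val, Nat.lt_succ_self _⟩
          (le_refl _) β hβz' ?_
        have hxw : x ⟨(⟨w0.val, Nat.lt_succ_self _⟩ : Fin (w0.val+1)).val,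
            lt_of_le_of_lt (Nat.lt_succ_iff.mp (Nat.lt_succ_self _)) w0.isLt⟩ = x w0 :=
          congrArg x (Fin.ext rfl)
        simpa [hxw] using hwβ'
  · have hmiss : ∀ kk : Fin p, kk.val ≠ 0 → kk.val ≤ t.val →
        ∃ w : Fin p, w.val < kk.val ∧ G.MissingAt {e} φ' k (x w) (φ' (f kk)) := by
      intro kk h1 h2
      obtain ⟨w, hw, hwm⟩ := hfan.missing kk h1
      refine ⟨w, hw, ?_⟩
      rw [hfanfix kk]
      have hcγ : φ (f kk) ≠ γ := fun hc => hk0 ⟨kk, h1, h2, hc⟩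
      exact hmiss_other _ _ hcγ (hβfan kk h1) hwm
    have hfan' := G.mk_prefix hfan t.val t.isLt hmiss
    refine G.extend_common t.val φ' hφ' _ _ _ hfan' ⟨t.val, Nat.lt_succ_self _⟩
      (le_refl _) β hβz' ?_
    have hxt : x ⟨(⟨t.val, Nat.lt_succ_self _⟩ : Fin (t.val+1)).val,
        lt_of_le_of_lt (Nat.lt_succ_iff.mp (Nat.lt_succ_self _)) t.isLt⟩ = x t :=
      congrArg x (Fin.ext rfl)
    simpa [hxt] using huβ'

lemma no_common {Δ k : ℕ} {z : V} {e : E} (hΔ : ∀ v, G.degree v ≤ Δ) (hΔk : Δ ≤ k)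
    (hz : z ∈ G.ends e) {φ : E → ℕ} (hφ : G.IsProperOff {e} k φ)
    {p : ℕ} {f : Fin p → E} {x : Fin p → V} (hfan : G.IsMultiFan {e} φ k z e p f x)
    (i j : Fin p) (γ : ℕ) (hne : x i ≠ x j)
    (hmi : G.MissingAt {e} φ k (x i) γ) (hmj : G.MissingAt {e} φ k (x j) γ) :
    ∃ c, G.IsProperOff ∅ k c := by
  classical
  by_cases hzγ : G.MissingAt {e} φ k z γ
  · exact G.extend_common i.val φ hφ p f x hfan i (le_refl _) γ hzγ hmi
  obtain ⟨β, hβz⟩ := G.exists_missing hΔ hΔk hφ z hz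
  have hγβ : γ ≠ β := fun h => hzγ (h ▸ hβz)
  by_cases hri : Relation.ReflTransGen
      (G.stepS (Finset.univ.filter fun g => g ≠ e ∧ (φ g = γ ∨ φ g = β))) (x i) z
  · by_cases hrj : Relation.ReflTransGen
        (G.stepS (Finset.univ.filter fun g => g ≠ e ∧ (φ g = γ ∨ φ g = β))) (x j) z
    · exfalso
      set S := Finset.univ.filter (fun g => g ≠ e ∧ (φ g = γ ∨ φ g = β)) with hS
      have hxz : ∀ m : Fin p, x m ≠ z := fun m h =>
        G.loopless (f m) (by rw [hfan.ends_eq m]; exact Sym2.mk_isDiag_iff.mpr h.symm)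
      have hcard1 : ∀ (w : V) (c : ℕ), (c = γ ∨ c = β) →
          (∀ g, g ≠ e → w ∈ G.ends g → φ g ≠ c) → G.edeg S w ≤ 1 := by
        intro w c hc hmiss
        apply Finset.card_le_one.mpr
        intro g hg g' hg'
        rw [Finset.mem_filter] at hg hg'
        obtain ⟨hgS, hgw⟩ := hg
        obtain ⟨hg'S, hg'w⟩ := hg'
        rw [hS, Finset.mem_filter] at hgS hg'S
        obtain ⟨-, hge, hgcol⟩ := hgS
        obtain ⟨-, hg'e, hg'col⟩ := hg'S
        have hcolg : φ g = φ g' := by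
          rcases hc with rfl | rfl
          · rcases hgcol with h1 | h1
            · exact absurd h1 (hmiss g hge hgw)
            · rcases hg'col with h2 | h2
              · exact absurd h2 (hmiss g' hg'e hg'w)
              · rw [h1, h2]
          · rcases hgcol with h1 | h1
            · rcases hg'col with h2 | h2
              · rw [h1, h2]
              · exact absurd h2 (hmiss g' hg'e hg'w)
            · exact absurd h1 (hmiss g hge hgw)
        exact G.unique_at hφ hge hg'e hgw hg'w hcolg
      have hdeg2 : ∀ w, G.edeg S w ≤ 2 := by
        intro w
        have hsub : S.filter (fun g => w ∈ G.ends g) ⊆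
            (S.filter fun g => w ∈ G.ends g ∧ φ g = γ) ∪
              (S.filter fun g => w ∈ G.ends g ∧ φ g = β) := by
          intro g hg
          rw [Finset.mem_filter] at hg
          obtain ⟨hgS, hgw⟩ := hg
          have := hgS
          rw [hS, Finset.mem_filter] at this
          rcases this.2.2 with h1 | h1
          · exact Finset.mem_union_left _ (Finset.mem_filter.mpr ⟨hgS, hgw, h1⟩)
          · exact Finset.mem_union_right _ (Finset.mem_filter.mpr ⟨hgS, hgw, h1⟩)
        have h1 : (S.filter fun g => w ∈ G.ends g ∧ φ g = γ).card ≤ 1 := by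
          apply Finset.card_le_one.mpr
          intro g hg g' hg'
          rw [Finset.mem_filter] at hg hg'
          have hge : g ≠ e := by
            have := hg.1; rw [hS, Finset.mem_filter] at this; exact this.2.1
          have hg'e : g' ≠ e := by
            have := hg'.1; rw [hS, Finset.mem_filter] at this; exact this.2.1
          exact G.unique_at hφ hge hg'e hg.2.1 hg'.2.1 (hg.2.2.trans hg'.2.2.symm)
        have h2 : (S.filter fun g => w ∈ G.ends g ∧ φ g = β).card ≤ 1 := by
          apply Finset.card_le_one.mpr
          intro g hg g' hg'
          rw [Finset.mem_filter] at hg hg'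
          have hge : g ≠ e := by
            have := hg.1; rw [hS, Finset.mem_filter] at this; exact this.2.1
          have hg'e : g' ≠ e := by
            have := hg'.1; rw [hS, Finset.mem_filter] at this; exact this.2.1
          exact G.unique_at hφ hge hg'e hg.2.1 hg'.2.1 (hg.2.2.trans hg'.2.2.symm)
        calc (S.filter fun g => w ∈ G.ends g).card
            ≤ ((S.filter fun g => w ∈ G.ends g ∧ φ g = γ) ∪
                (S.filter fun g => w ∈ G.ends g ∧ φ g = β)).card := Finset.card_le_card hsub
          _ ≤ _ + _ := Finset.card_union_le _ _
          _ ≤ 2 := by omega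
      have hdz : G.edeg S z ≤ 1 :=
        hcard1 z β (Or.inr rfl) (fun g hg hgz => hβz.2 g (by simp [hg]) hgz)
      have hdi : G.edeg S (x i) ≤ 1 :=
        hcard1 (x i) γ (Or.inl rfl) (fun g hg hgw => hmi.2 g (by simp [hg]) hgw)
      have hdj : G.edeg S (x j) ≤ 1 :=
        hcard1 (x j) γ (Or.inl rfl) (fun g hg hgw => hmj.2 g (by simp [hg]) hgw)
      exact G.tri S.card S (le_refl _) hdeg2 z (x i) (x j) (fun h => hxz i h.symm)
        (fun h => hxz j h.symm) hne hdz hdi hdj (G.rtg_symm hri) (G.rtg_symm hrj)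
    · exact G.swap_case hφ hfan hγβ hβz j hmj hrj
  · exact G.swap_case hφ hfan hγβ hβz i hmi hri

end Multigraph

/-- A form of Vizing's fan equation: if the uncoloured edge `e` at `z` cannot
be coloured, i.e. `G` has no proper `k`-edge-colouring, then every maximal
multi-fan at `z` with respect to `e` and `φ` has `p ≥ 2` and the total number
of colours missing at its vertices is at most the number of its edges. -/
theorem vizing_fan_equation {V E : Type} [Fintype V] [Fintype E] [DecidableEq V]
    [DecidableEq E] (G : Multigraph V E) (Δ k : ℕ)
    (hΔ : ∀ v, G.degree v ≤ Δ) (hΔk : Δ ≤ k)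
    (z : V) (e : E) (hz : z ∈ G.ends e)
    (φ : E → ℕ) (hφ : G.IsProperOff {e} k φ)
    (hno : ¬ ∃ c : E → ℕ, G.IsProperOff ∅ k c)
    (p : ℕ) (f : Fin p → E) (x : Fin p → V)
    (hF : G.IsMaximalMultiFan {e} φ k z e p f x) :
    2 ≤ p ∧
      ∑ v ∈ Finset.univ.image x, {c : ℕ | G.MissingAt {e} φ k v c}.ncard ≤ p := by
  classical
  obtain ⟨hfan, hmax⟩ := hF
  have hnocomm : ∀ (i : Fin p) γ, G.MissingAt {e} φ k z γ →
      G.MissingAt {e} φ k (x i) γ → False :=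
    fun i γ h1 h2 => hno (G.extend_common i.val φ hφ p f x hfan i (le_refl _) γ h1 h2)
  have hnotwo : ∀ (i j : Fin p) γ, x i ≠ x j → G.MissingAt {e} φ k (x i) γ →
      G.MissingAt {e} φ k (x j) γ → False :=
    fun i j γ hne h1 h2 => hno (G.no_common hΔ hΔk hz hφ hfan i j γ hne h1 h2)
  set Mf : V → Finset ℕ := fun v => (Finset.Icc 1 k).filter (fun c => G.MissingAt {e} φ k v c)
    with hMf
  have hncard : ∀ v, {c : ℕ | G.MissingAt {e} φ k v c}.ncard = (Mf v).card := by
    intro v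
    have hset : {c : ℕ | G.MissingAt {e} φ k v c} = ↑(Mf v) := by
      ext c
      simp only [hMf, Set.mem_setOf_eq, Finset.coe_filter, Set.mem_setOf_eq, Finset.mem_Icc]
      constructor
      · intro h
        have := h.1
        rw [Finset.mem_Icc] at this
        exact ⟨this, h⟩
      · exact fun h => h.2
    rw [hset, Set.ncard_coe_finset]
  have hidx : ∀ (c : ℕ), (∃ i : Fin p, G.MissingAt {e} φ k (x i) c) →
      ∃ m : Fin p, m.val ≠ 0 ∧ φ (f m) = c := by
    intro c hc
    obtain ⟨i, hci⟩ := hc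
    have hzc : ¬ G.MissingAt {e} φ k z c := fun h => hnocomm i c h hci
    have hcI : c ∈ Finset.Icc 1 k := hci.1
    have hex : ∃ g, g ∉ ({e} : Finset E) ∧ z ∈ G.ends g ∧ φ g = c := by
      by_contra hcon
      push_neg at hcon
      exact hzc ⟨hcI, hcon⟩
    obtain ⟨g, hg, hgz, hgc⟩ := hex
    have hge : g ≠ e := by simpa using hg
    have hrange : g ∈ Set.range f := by
      by_contra hr
      exact hmax g hg hr hgz ⟨i, hgc ▸ hci⟩
    obtain ⟨m, hm⟩ := hrange
    refine ⟨m, ?_, by rw [hm]; exact hgc⟩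
    intro h0
    have hm0 : m = ⟨0, hfan.pos⟩ := Fin.ext (by simp [h0])
    rw [hm0, hfan.first] at hm
    exact hge hm.symm
  have hdisj : ∀ v1 ∈ Finset.univ.image x, ∀ v2 ∈ Finset.univ.image x, v1 ≠ v2 →
      Disjoint (Mf v1) (Mf v2) := by
    intro v1 hv1 v2 hv2 hne12
    obtain ⟨i, -, rfl⟩ := Finset.mem_image.mp hv1
    obtain ⟨j, -, rfl⟩ := Finset.mem_image.mp hv2
    rw [Finset.disjoint_left]
    intro c hc1 hc2
    simp only [hMf, Finset.mem_filter] at hc1 hc2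
    exact hnotwo i j c hne12 hc1.2 hc2.2
  have hmem_missing : ∀ c ∈ (Finset.univ.image x).biUnion Mf,
      ∃ i : Fin p, G.MissingAt {e} φ k (x i) c := by
    intro c hc
    obtain ⟨v, hv, hcv⟩ := Finset.mem_biUnion.mp hc
    obtain ⟨i, -, rfl⟩ := Finset.mem_image.mp hv
    rw [hMf] at hcv
    exact ⟨i, (Finset.mem_filter.mp hcv).2⟩
  set F : ℕ → Fin p := fun c =>
    if h : ∃ m : Fin p, m.val ≠ 0 ∧ φ (f m) = c then h.choose else ⟨0, hfan.pos⟩ with hFdef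
  have hFspec : ∀ c, (∃ i : Fin p, G.MissingAt {e} φ k (x i) c) →
      (F c).val ≠ 0 ∧ φ (f (F c)) = c := by
    intro c hc
    have h := hidx c hc
    rw [hFdef]
    simp only [dif_pos h]
    exact h.choose_spec
  have hinj : ((Finset.univ.image x).biUnion Mf).card ≤
      (Finset.univ.erase (⟨0, hfan.pos⟩ : Fin p)).card := by
    apply Finset.card_le_card_of_injOn F
    · intro c hc
      obtain ⟨h1, -⟩ := hFspec c (hmem_missing c hc)
      exact Finset.mem_erase.mpr ⟨fun hEq => h1 (congrArg Fin.val hEq), Finset.mem_univ _⟩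
    · intro c1 hc1 c2 hc2 hEq
      obtain ⟨-, h1⟩ := hFspec c1 (hmem_missing c1 hc1)
      obtain ⟨-, h2⟩ := hFspec c2 (hmem_missing c2 hc2)
      rw [← h1, ← h2, hEq]
  have hcard_erase : (Finset.univ.erase (⟨0, hfan.pos⟩ : Fin p)).card = p - 1 := by
    rw [Finset.card_erase_of_mem (Finset.mem_univ _), Finset.card_univ, Fintype.card_fin]
  have hsum : ∑ v ∈ Finset.univ.image x, {c : ℕ | G.MissingAt {e} φ k v c}.ncard
      = ((Finset.univ.image x).biUnion Mf).card := by
    rw [Finset.card_biUnion hdisj]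
    exact Finset.sum_congr rfl (fun v _ => hncard v)
  have hp2 : 2 ≤ p := by
    have hends0 : G.ends e = s(z, x ⟨0, hfan.pos⟩) := by
      have h1 := hfan.ends_eq ⟨0, hfan.pos⟩
      rwa [hfan.first] at h1
    have hx0 : x ⟨0, hfan.pos⟩ ∈ G.ends e := by
      rw [hends0]; exact Sym2.mem_mk_right _ _
    obtain ⟨c0, hc0⟩ := G.exists_missing hΔ hΔk hφ (x ⟨0, hfan.pos⟩) hx0
    obtain ⟨m, hm0, -⟩ := hidx c0 ⟨⟨0, hfan.pos⟩, hc0⟩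
    have := m.isLt
    omega
  refine ⟨hp2, ?_⟩
  rw [hsum]
  have := hinj
  rw [hcard_erase] at this
  omega
end

section
/- Let G be a multigraph, M a matching with edges pairwise at distance at least 5, Φ a precolouring of M, M′ ⊇ M a matching, and φ a proper (Δ + μ − 1)-edge-colouring of G \ M′. Suppose (M′, φ) is modified by a Vizing fan shift pivoting at the endpoint w₂ of a path e, e₁, e₂ certifying that e ∈ M is bad (so e₂ leaves M′ and some new edge f_p incident to w₂ enters M′, where f_p is not incident to any edge of M′). Then any edge of M that is bad with respect to the new pair but not the old is within distance 4 of e; in particular, under the distance-5 condition on M, no new bad edge is created. -/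
open Finset

private lemma step_walk {V E : Type} [Fintype V] [Fintype E] [DecidableEq V]
    [DecidableEq E] (G : Multigraph V E) (g : E) {u v : V}
    (hu : u ∈ G.ends g) (hv : v ∈ G.ends g) :
    ∃ p : G.toSimple.Walk u v, p.length ≤ 1 := by
  by_cases h : u = v
  · subst h; exact ⟨.nil, by simp⟩
  · have hadj : G.toSimple.Adj u v := ⟨h, g, (Sym2.mem_and_mem_iff h).mp ⟨hu, hv⟩⟩
    exact ⟨.cons hadj .nil, by simp⟩

private lemma walk_le_trans {V : Type} {H : SimpleGraph V} {u v w : V} {m n : ℕ}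
    (h1 : ∃ p : H.Walk u v, p.length ≤ m) (h2 : ∃ p : H.Walk v w, p.length ≤ n) :
    ∃ p : H.Walk u w, p.length ≤ m + n := by
  obtain ⟨p, hp⟩ := h1
  obtain ⟨q, hq⟩ := h2
  exact ⟨p.append q, by rw [SimpleGraph.Walk.length_append]; omega⟩

/-- Locality of damage in the C5-free proof: after a Vizing fan shift at the
endpoint `w₂` of a path `e, e₁, e₂` certifying that `e ∈ M` is bad (removing
`e₂` from `M'` and inserting a new edge `fp` at `w₂`), any newly bad edge of
`M` is within distance `4` of `e`; in particular, with the edges of `M`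
pairwise at distance at least `5`, no new bad edge is created. -/
theorem no_new_bad_edges {V E : Type} [Fintype V] [Fintype E] [DecidableEq V]
    [DecidableEq E] (G : Multigraph V E) (Δ μ : ℕ)
    (hΔ : ∀ v, G.degree v ≤ Δ) (hμ : ∀ s, G.multiplicity s ≤ μ)
    (M M' : Finset E) (hMM' : M ⊆ M') (hM : G.IsMatching M) (hM' : G.IsMatching M')
    (hdist : ∀ e ∈ M, ∀ f ∈ M, e ≠ f → G.EdgeDistGe e f 5)
    (Φ : E → ℕ) (φ : E → ℕ) (hφ : G.IsProperOff M' (Δ + μ - 1) φ)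
    (e e₁ e₂ : E) (he : e ∈ M)
    (hcert : G.EdgeAdj e e₁ ∧ G.EdgeAdj e₁ e₂ ∧ e₁ ∉ M' ∧ φ e₁ = Φ e ∧ e₂ ∈ M' \ M)
    (w₂ : V) (hw₂ : w₂ ∈ G.ends e₂ ∧ w₂ ∉ G.ends e₁)
    (fp : E) (hfp : w₂ ∈ G.ends fp) (hfpM' : fp ∉ M')
    (hfpfree : ∀ g ∈ M', g ≠ e₂ → ¬ G.EdgeAdj fp g)
    (φ' : E → ℕ) (hφ' : G.IsProperOff (insert fp (M'.erase e₂)) (Δ + μ - 1) φ')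
    (hagree : ∀ g, w₂ ∉ G.ends g → φ' g = φ g) :
    (∀ e' ∈ M, G.IsBadEdge M (insert fp (M'.erase e₂)) Φ φ' e' →
        ¬ G.IsBadEdge M M' Φ φ e' → G.EdgeDistLe e' e 4) ∧
      ∀ e' ∈ M, G.IsBadEdge M (insert fp (M'.erase e₂)) Φ φ' e' →
        G.IsBadEdge M M' Φ φ e' := by
  classical
  obtain ⟨h_ee1, h_e1e2, h_e1M', h_col, h_e2⟩ := hcert
  obtain ⟨hne_ee1, b, hb_e, hb_e1⟩ := h_ee1
  obtain ⟨hne_e1e2, a, ha_e1, ha_e2⟩ := h_e1e2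
  -- tail walk: from w₂ to b ∈ ends e, length ≤ 2
  have tail : ∃ p : G.toSimple.Walk w₂ b, p.length ≤ 2 :=
    walk_le_trans (step_walk G e₂ hw₂.1 ha_e2) (step_walk G e₁ ha_e1 hb_e1)
  have main : ∀ e' ∈ M, G.IsBadEdge M (insert fp (M'.erase e₂)) Φ φ' e' →
      ¬ G.IsBadEdge M M' Φ φ e' → G.EdgeDistLe e' e 4 := by
    intro e' he' hbad' hnotbad
    obtain ⟨_, e₁', e₂', h1, h2, hnM'', hcol', he₂'⟩ := hbad'
    obtain ⟨hne1, u, hu_e', hu_e1'⟩ := h1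
    by_cases hc1 : e₁' = e₂
    · subst hc1
      refine ⟨u, b, hu_e', hb_e, ?_⟩
      have : ∃ p : G.toSimple.Walk u b, p.length ≤ 1 + 1 :=
        walk_le_trans (step_walk G e₁' hu_e1' ha_e2) (step_walk G e₁ ha_e1 hb_e1)
      obtain ⟨p, hp⟩ := this
      exact ⟨p, by omega⟩
    · by_cases hc2 : e₂' = fp
      · subst hc2
        obtain ⟨_, v', hv'_e1', hv'_fp⟩ := h2
        refine ⟨u, b, hu_e', hb_e, ?_⟩
        have : ∃ p : G.toSimple.Walk u b, p.length ≤ 1 + 1 + 2 :=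
          walk_le_trans (walk_le_trans (step_walk G e₁' hu_e1' hv'_e1')
            (step_walk G e₂' hv'_fp hfp)) tail
        obtain ⟨p, hp⟩ := this
        exact ⟨p, by omega⟩
      · have he₂'M' : e₂' ∈ M' \ M := by
          rcases Finset.mem_sdiff.mp he₂' with ⟨hmem, hnM⟩
          rcases Finset.mem_insert.mp hmem with h | h
          · exact absurd h hc2
          · exact Finset.mem_sdiff.mpr ⟨Finset.mem_of_mem_erase h, hnM⟩
        have he₁'M' : e₁' ∉ M' := by
          intro hmem
          exact hnM'' (Finset.mem_insert_of_mem (Finset.mem_erase.mpr ⟨hc1, hmem⟩))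
        by_cases hw : w₂ ∈ G.ends e₁'
        · refine ⟨u, b, hu_e', hb_e, ?_⟩
          have : ∃ p : G.toSimple.Walk u b, p.length ≤ 1 + 2 :=
            walk_le_trans (step_walk G e₁' hu_e1' hw) tail
          obtain ⟨p, hp⟩ := this
          exact ⟨p, by omega⟩
        · exact absurd ⟨he', e₁', e₂', ⟨hne1, u, hu_e', hu_e1'⟩, h2, he₁'M',
            (hagree e₁' hw) ▸ hcol', he₂'M'⟩ hnotbad
  refine ⟨main, ?_⟩
  intro e' he' hbad'
  by_cases hold : G.IsBadEdge M M' Φ φ e'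
  · exact hold
  · by_cases hee : e' = e
    · subst hee
      exact ⟨he', e₁, e₂, ⟨hne_ee1, b, hb_e, hb_e1⟩, ⟨hne_e1e2, a, ha_e1, ha_e2⟩, h_e1M', h_col, h_e2⟩
    · obtain ⟨u, v, hu, hv, p, hp⟩ := main e' he' hbad' hold
      have := hdist e' he' e he hee u v hu hv p
      omega
end
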